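/- Let ψ: ℕ → (0,∞) be almost decreasing with constant M (ψ(k₂) ≤ M ψ(k₁) for k₁ ≤ k₂), and suppose there is K > 0 with ψ(k)/ψ(2k) ≤ K for all k. Then for every n ∈ ℕ there is a constant C > 0 (depending only on M and K) and a function f₂ ∈ L^ψ_{β,∞} such that for every subset γ ⊂ ℤ of cardinality 2n, ‖f₂ − S_γ(f₂)‖_{L_s} ≥ C ψ(n), for any 1 ≤ s < ∞ and β ∈ ℝ. Consequently e^⊥_{2n}(L^ψ_{β,∞})_s ≥ C ψ(n). -/

import Mathlib

open MeasureTheory Real Complex Finset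
open scoped ENNReal

/-- The `k`-th Fourier coefficient of a `2π`-periodic function. -/
noncomputable def fourierCoef (f : ℝ → ℂ) (k : ℤ) : ℂ :=
  (1 / (2 * π)) * ∫ t in (-π)..π, f t * Complex.exp (-Complex.I * k * t)

/-- Membership in the class `L^ψ_{β,∞}`. -/
def LpsiClass (ψ : ℕ → ℝ) (β : ℝ) (f : ℝ → ℝ) : Prop :=
  (∀ t, f (t + 2 * π) = f t) ∧ IntervalIntegrable f volume (-π) π ∧
  ∃ g : ℝ → ℝ, (∀ t, g (t + 2 * π) = g t) ∧ IntervalIntegrable g volume (-π) π ∧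
    (∀ᵐ t : ℝ, |g t| ≤ 1) ∧
    fourierCoef (fun t => (g t : ℂ)) 0 = 0 ∧
    ∀ k : ℤ, k ≠ 0 →
      fourierCoef (fun t => (g t : ℂ)) k
        = (fourierCoef (fun t => (f t : ℂ)) k / (ψ k.natAbs : ℂ)) *
            Complex.exp (Complex.I * (β * π / 2) * (k.sign : ℤ))

/-- Best orthogonal trigonometric approximation of width `m` of the class `L^ψ_{β,∞}`
in the metric of `L_s`. -/
noncomputable def eBotClass (ψ : ℕ → ℝ) (β : ℝ) (m : ℕ) (s : ℝ≥0∞) : ℝ≥0∞ :=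
  ⨆ f : {f : ℝ → ℝ // LpsiClass ψ β f},
    ⨅ γ : {γ : Finset ℤ // γ.card = m},
      eLpNorm
        (fun t : ℝ => (f.1 t : ℂ) -
          ∑ k ∈ γ.1, fourierCoef (fun t => (f.1 t : ℂ)) k * Complex.exp (Complex.I * k * t))
        s (volume.restrict (Set.Ioc (0 : ℝ) (2 * π)))


set_option linter.unusedVariables false
set_option maxHeartbeats 1000000


lemma exp_int_mul_continuous (m : ℤ) : Continuous fun t : ℝ => Complex.exp (Complex.I * m * t) := by
  exact Complex.continuous_exp.comp (by continuity)

lemma integral_exp_int (m : ℤ) (a : ℝ) :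
    ∫ t in a..(a + 2*π), Complex.exp (Complex.I * m * t) = if m = 0 then (2*π : ℂ) else 0 := by
  by_cases hm : m = 0
  · simp [hm, Complex.ofReal_sub]
  · have hc : (Complex.I * m : ℂ) ≠ 0 := by
      simp [Complex.I_ne_zero, hm]
    have hd : ∀ x ∈ Set.uIcc a (a + 2*π),
        HasDerivAt (fun t : ℝ => Complex.exp (Complex.I * m * t) / (Complex.I * m))
          (Complex.exp (Complex.I * m * x)) x := by
      intro x _
      have h1 : HasDerivAt (fun z : ℂ => Complex.exp (Complex.I * m * z) / (Complex.I * m))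
          (Complex.exp (Complex.I * m * (x : ℂ))) (x : ℂ) := by
        have := (((hasDerivAt_id (x : ℂ)).const_mul (Complex.I * m)).cexp).div_const (Complex.I * m)
        simpa [mul_div_assoc, mul_div_cancel_right₀ _ hc] using this
      exact h1.comp_ofReal
    rw [intervalIntegral.integral_eq_sub_of_hasDerivAt hd
      ((exp_int_mul_continuous m).intervalIntegrable _ _)]
    have : Complex.exp (Complex.I * m * ((a + 2*π : ℝ) : ℂ)) = Complex.exp (Complex.I * m * (a : ℂ)) := by
      push_cast
      rw [show Complex.I * m * ((a : ℂ) + 2*π) = Complex.I * m * a + m * (2*π*Complex.I) by ring,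
        Complex.exp_add, Complex.exp_int_mul_two_pi_mul_I, mul_one]
    push_cast at this ⊢
    rw [if_neg hm, this, sub_self]






lemma cexp_int_cont (k : ℤ) : Continuous fun t : ℝ => Complex.exp (Complex.I * k * t) :=
  Complex.continuous_exp.comp (by continuity)

lemma cexp_int_cont' (k : ℤ) : Continuous fun t : ℝ => Complex.exp (-Complex.I * k * t) :=
  Complex.continuous_exp.comp (by continuity)

lemma key_ortho (k l : ℤ) (a : ℝ) :
    ∫ t in a..(a + 2*π), Complex.exp (Complex.I * k * t) * Complex.exp (-Complex.I * l * t)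
      = if k = l then (2*π : ℂ) else 0 := by
  have h : ∀ t : ℝ, Complex.exp (Complex.I * k * t) * Complex.exp (-Complex.I * l * t)
      = Complex.exp (Complex.I * ((k - l : ℤ) : ℂ) * t) := by
    intro t; rw [← Complex.exp_add]; congr 1; push_cast; ring
  simp only [h]
  rw [integral_exp_int (k - l) a]
  simp [sub_eq_zero]

lemma key_ortho_pi (k l : ℤ) :
    ∫ t in (-π)..π, Complex.exp (Complex.I * k * t) * Complex.exp (-Complex.I * l * t)
      = if k = l then (2*π : ℂ) else 0 := by
  have := key_ortho k l (-π)
  rwa [show -π + 2*π = π by ring] at this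

lemma key_ortho_two_pi (k l : ℤ) :
    ∫ t in (0:ℝ)..(2*π), Complex.exp (Complex.I * k * t) * Complex.exp (-Complex.I * l * t)
      = if k = l then (2*π : ℂ) else 0 := by
  have := key_ortho k l 0
  rwa [zero_add] at this

lemma conj_exp_int (l : ℤ) (t : ℝ) :
    (starRingEnd ℂ) (Complex.exp (Complex.I * l * t)) = Complex.exp (-Complex.I * l * t) := by
  rw [← Complex.exp_conj]; congr 1; simp

lemma fourierCoef_sum (S : Finset ℤ) (c : ℤ → ℂ) (l : ℤ) :
    fourierCoef (fun t => ∑ k ∈ S, c k * Complex.exp (Complex.I * k * t)) l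
      = if l ∈ S then c l else 0 := by
  unfold fourierCoef
  have h1 : (∫ t in (-π)..π, (∑ k ∈ S, c k * Complex.exp (Complex.I * k * t))
        * Complex.exp (-Complex.I * l * t))
      = ∑ k ∈ S, c k * ∫ t in (-π)..π,
          Complex.exp (Complex.I * k * t) * Complex.exp (-Complex.I * l * t) := by
    have hint : ∀ k ∈ S, IntervalIntegrable
        (fun t : ℝ => c k * Complex.exp (Complex.I * k * t) * Complex.exp (-Complex.I * l * t))
        volume (-π) π :=
      fun k _ => ((continuous_const.mul (cexp_int_cont k)).mul (cexp_int_cont' l)).intervalIntegrable _ _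
    simp only [Finset.sum_mul]
    rw [intervalIntegral.integral_finset_sum hint]
    refine Finset.sum_congr rfl fun k _ => ?_
    rw [show (fun t : ℝ => c k * Complex.exp (Complex.I * k * t) * Complex.exp (-Complex.I * l * t))
        = fun t : ℝ => c k * (Complex.exp (Complex.I * k * t) * Complex.exp (-Complex.I * l * t))
      from funext fun t => mul_assoc _ _ _]
    exact intervalIntegral.integral_const_mul _ _
  rw [h1]
  have h2 : ∀ k ∈ S, c k * (∫ t in (-π)..π,
        Complex.exp (Complex.I * k * t) * Complex.exp (-Complex.I * l * t))
      = if k = l then c l * (2*π:ℂ) else 0 := by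
    intro k _
    rw [key_ortho_pi k l]
    split
    · rename_i h; rw [h]
    · simp
  rw [Finset.sum_congr rfl h2, Finset.sum_ite_eq' S l (fun _ => c l * (2*π:ℂ))]
  have hπ0 : (π : ℂ) ≠ 0 := by exact_mod_cast Real.pi_ne_zero
  by_cases hl : l ∈ S
  · rw [if_pos hl, if_pos hl]
    field_simp
  · simp [hl]





lemma pairing_integral (S T : Finset ℤ) (c d : ℤ → ℂ) (hST : S ⊆ T) :
    ∫ t in (0:ℝ)..(2*π),
        (∑ k ∈ S, c k * Complex.exp (Complex.I * k * t)) *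
          (starRingEnd ℂ) (∑ k ∈ T, d k * Complex.exp (Complex.I * k * t))
      = (2*π:ℂ) * ∑ k ∈ S, c k * (starRingEnd ℂ) (d k) := by
  have expand : ∀ t : ℝ,
      (∑ k ∈ S, c k * Complex.exp (Complex.I * k * t)) *
          (starRingEnd ℂ) (∑ k ∈ T, d k * Complex.exp (Complex.I * k * t))
        = ∑ k ∈ S, ∑ k' ∈ T, (c k * (starRingEnd ℂ) (d k')) *
            (Complex.exp (Complex.I * k * t) * Complex.exp (-Complex.I * k' * t)) := by
    intro t
    rw [map_sum, Finset.sum_mul]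
    refine Finset.sum_congr rfl fun k _ => ?_
    rw [Finset.mul_sum]
    refine Finset.sum_congr rfl fun k' _ => ?_
    rw [map_mul, conj_exp_int]
    ring
  simp only [expand]
  have hint1 : ∀ k ∈ S, IntervalIntegrable
      (fun t : ℝ => ∑ k' ∈ T, (c k * (starRingEnd ℂ) (d k')) *
        (Complex.exp (Complex.I * k * t) * Complex.exp (-Complex.I * k' * t)))
      volume 0 (2*π) := by
    intro k _
    apply Continuous.intervalIntegrable
    exact continuous_finset_sum _ fun k' _ =>
      continuous_const.mul ((cexp_int_cont k).mul (cexp_int_cont' k'))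
  rw [intervalIntegral.integral_finset_sum hint1]
  have step : ∀ k ∈ S,
      (∫ t in (0:ℝ)..(2*π), ∑ k' ∈ T, (c k * (starRingEnd ℂ) (d k')) *
          (Complex.exp (Complex.I * k * t) * Complex.exp (-Complex.I * k' * t)))
        = c k * (starRingEnd ℂ) (d k) * (2*π:ℂ) := by
    intro k hk
    have hint2 : ∀ k' ∈ T, IntervalIntegrable
        (fun t : ℝ => (c k * (starRingEnd ℂ) (d k')) *
          (Complex.exp (Complex.I * k * t) * Complex.exp (-Complex.I * k' * t)))
        volume 0 (2*π) := fun k' _ =>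
      (continuous_const.mul ((cexp_int_cont k).mul (cexp_int_cont' k'))).intervalIntegrable _ _
    rw [intervalIntegral.integral_finset_sum hint2]
    have : ∀ k' ∈ T, (∫ t in (0:ℝ)..(2*π), (c k * (starRingEnd ℂ) (d k')) *
          (Complex.exp (Complex.I * k * t) * Complex.exp (-Complex.I * k' * t)))
        = if k = k' then c k * (starRingEnd ℂ) (d k') * (2*π:ℂ) else 0 := by
      intro k' _
      rw [intervalIntegral.integral_const_mul, key_ortho_two_pi k k']
      split <;> simp
    rw [Finset.sum_congr rfl this, Finset.sum_ite_eq T k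
      (fun k' => c k * (starRingEnd ℂ) (d k') * (2*π:ℂ)), if_pos (hST hk)]
  rw [Finset.sum_congr rfl step, ← Finset.sum_mul, mul_comm]


noncomputable def rsPair : ℕ → (ℕ → ℝ) × (ℕ → ℝ)
  | 0 => (fun _ => 1, fun _ => 1)
  | (m+1) =>
    (fun k => if k < 2^m then (rsPair m).1 k else (rsPair m).2 (k - 2^m),
     fun k => if k < 2^m then (rsPair m).1 k else -((rsPair m).2 (k - 2^m)))

lemma rsPair_unit (m : ℕ) : ∀ k, ((rsPair m).1 k = 1 ∨ (rsPair m).1 k = -1)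
    ∧ ((rsPair m).2 k = 1 ∨ (rsPair m).2 k = -1) := by
  induction m with
  | zero => intro k; exact ⟨Or.inl rfl, Or.inl rfl⟩
  | succ m ih =>
    intro k
    simp only [rsPair]
    constructor
    · split
      · exact (ih k).1
      · exact (ih (k - 2^m)).2
    · split
      · exact (ih k).1
      · rcases (ih (k - 2^m)).2 with h | h <;> simp [h]

noncomputable def rsP (m : ℕ) (t : ℝ) : ℂ :=
  ∑ j ∈ Finset.range (2^m), ((rsPair m).1 j : ℂ) * Complex.exp (Complex.I * j * t)

noncomputable def rsQ (m : ℕ) (t : ℝ) : ℂ :=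
  ∑ j ∈ Finset.range (2^m), ((rsPair m).2 j : ℂ) * Complex.exp (Complex.I * j * t)

lemma exp_nat_shift (N j : ℕ) (t : ℝ) :
    Complex.exp (Complex.I * ((N + j : ℕ) : ℂ) * t)
      = Complex.exp (Complex.I * (N : ℕ) * t) * Complex.exp (Complex.I * j * t) := by
  rw [← Complex.exp_add]; push_cast; ring_nf

lemma rsP_succ (m : ℕ) (t : ℝ) :
    rsP (m+1) t = rsP m t + Complex.exp (Complex.I * ((2^m : ℕ) : ℂ) * t) * rsQ m t := by
  unfold rsP rsQ
  rw [show 2^(m+1) = 2^m + 2^m by ring, Finset.sum_range_add]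
  congr 1
  · refine Finset.sum_congr rfl fun j hj => ?_
    rw [Finset.mem_range] at hj
    simp [rsPair, hj]
  · rw [Finset.mul_sum]
    refine Finset.sum_congr rfl fun j hj => ?_
    have h1 : (rsPair (m+1)).1 (2^m + j) = (rsPair m).2 j := by
      simp [rsPair, Nat.not_lt.2 (Nat.le_add_right (2^m) j)]
    rw [h1, exp_nat_shift]
    ring

lemma rsQ_succ (m : ℕ) (t : ℝ) :
    rsQ (m+1) t = rsP m t - Complex.exp (Complex.I * ((2^m : ℕ) : ℂ) * t) * rsQ m t := by
  unfold rsP rsQ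
  rw [show 2^(m+1) = 2^m + 2^m by ring, Finset.sum_range_add]
  rw [sub_eq_add_neg]
  congr 1
  · refine Finset.sum_congr rfl fun j hj => ?_
    rw [Finset.mem_range] at hj
    simp [rsPair, hj]
  · have h2 : ∀ j ∈ Finset.range (2^m),
        ((rsPair (m+1)).2 (2^m + j) : ℂ) * Complex.exp (Complex.I * ((2^m + j : ℕ) : ℂ) * t)
          = -(((rsPair m).2 j : ℂ) * (Complex.exp (Complex.I * ((2^m : ℕ) : ℂ) * t)
              * Complex.exp (Complex.I * j * t))) := by
      intro j _
      have h3 : (rsPair (m+1)).2 (2^m + j) = -((rsPair m).2 j) := by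
        simp [rsPair, Nat.not_lt.2 (Nat.le_add_right (2^m) j)]
      rw [h3, exp_nat_shift]
      push_cast
      ring
    rw [Finset.sum_congr rfl h2]
    rw [Finset.sum_neg_distrib]
    rw [Finset.mul_sum]
    congr 1
    exact Finset.sum_congr rfl fun j _ => by ring

lemma abs_cexp_I_nat (N : ℕ) (t : ℝ) :
    ‖Complex.exp (Complex.I * ((N : ℕ) : ℂ) * t)‖ = 1 := by
  rw [show Complex.I * ((N : ℕ) : ℂ) * (t : ℂ) = (((N : ℝ) * t : ℝ) : ℂ) * Complex.I by
    push_cast; ring]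
  exact Complex.norm_exp_ofReal_mul_I _

lemma parallelogram_c (a b : ℂ) :
    ‖a + b‖^2 + ‖a - b‖^2 = 2*(‖a‖^2 + ‖b‖^2) := by
  simp only [Complex.sq_norm, Complex.normSq_apply, Complex.add_re, Complex.add_im,
    Complex.sub_re, Complex.sub_im]
  ring

lemma rsPQ_sq (m : ℕ) (t : ℝ) :
    ‖rsP m t‖^2 + ‖rsQ m t‖^2 = 2^(m+1) := by
  induction m with
  | zero =>
    unfold rsP rsQ
    simp [rsPair]
    norm_num
  | succ m ih =>
    rw [rsP_succ, rsQ_succ, parallelogram_c]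
    rw [norm_mul, abs_cexp_I_nat, mul_pow, one_pow, one_mul, ih]
    ring

lemma rsP_bound (m : ℕ) (t : ℝ) :
    ‖rsP m t‖ ≤ Real.sqrt (2^(m+1)) := by
  have h := rsPQ_sq m t
  have h2 : ‖rsP m t‖^2 ≤ 2^(m+1) := by nlinarith [sq_nonneg (‖rsQ m t‖)]
  have := Real.sqrt_le_sqrt h2
  rwa [Real.sqrt_sq (norm_nonneg _)] at this




section Constr
variable (ψ : ℕ → ℝ) (β : ℝ) (n m : ℕ)

def kk (j : ℕ) : ℤ := (n : ℤ) + 1 + j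

noncomputable def aRS : ℝ := 1 / (2 * Real.sqrt (2^(m+1)))

def Sfin : Finset ℤ :=
  ((Finset.range (2^m)).image fun j => kk n j) ∪
    ((Finset.range (2^m)).image fun j => -(kk n j))

noncomputable def EE (k : ℤ) : ℂ :=
  Complex.exp (-(Complex.I * (β * π / 2) * (k.sign : ℤ)))

noncomputable def fcoef (k : ℤ) : ℂ :=
  ((aRS m * (rsPair m).1 (k.natAbs - (n+1)) * ψ k.natAbs : ℝ) : ℂ) * EE β k

noncomputable def dcoef (k : ℤ) : ℂ :=
  (((rsPair m).1 (k.natAbs - (n+1)) : ℝ) : ℂ) * EE β k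

noncomputable def gcoef (k : ℤ) : ℂ :=
  ((aRS m * (rsPair m).1 (k.natAbs - (n+1)) : ℝ) : ℂ)

noncomputable def fCc (t : ℝ) : ℂ :=
  ∑ k ∈ Sfin n m, fcoef ψ β n m k * Complex.exp (Complex.I * k * t)

noncomputable def gCc (t : ℝ) : ℂ :=
  ∑ k ∈ Sfin n m, gcoef n m k * Complex.exp (Complex.I * k * t)

noncomputable def hCc (t : ℝ) : ℂ :=
  ∑ k ∈ Sfin n m, dcoef β n m k * Complex.exp (Complex.I * k * t)

lemma kk_inj : Function.Injective (kk n) := by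
  intro a b h
  simp only [kk] at h
  omega

lemma kk_cast (j : ℕ) : kk n j = ((n + 1 + j : ℕ) : ℤ) := by simp [kk]

lemma natAbs_kk (j : ℕ) : (kk n j).natAbs = n + 1 + j := by
  rw [kk_cast, Int.natAbs_natCast]

lemma natAbs_neg_kk (j : ℕ) : (-(kk n j)).natAbs = n + 1 + j := by
  rw [Int.natAbs_neg, natAbs_kk]

lemma mem_Sfin {k : ℤ} :
    k ∈ Sfin n m ↔ (∃ j < 2^m, k = kk n j) ∨ (∃ j < 2^m, k = -(kk n j)) := by
  simp [Sfin, Finset.mem_union, Finset.mem_image, eq_comm]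

lemma Sfin_natAbs {k : ℤ} (hk : k ∈ Sfin n m) :
    n + 1 ≤ k.natAbs ∧ k.natAbs ≤ n + 2^m := by
  rw [mem_Sfin] at hk
  rcases hk with ⟨j, hj, rfl⟩ | ⟨j, hj, rfl⟩ <;>
    simp [natAbs_kk, natAbs_neg_kk] <;> omega

lemma Sfin_disj :
    Disjoint ((Finset.range (2^m)).image fun j => kk n j)
      ((Finset.range (2^m)).image fun j => -(kk n j)) := by
  rw [Finset.disjoint_left]
  rintro k hk1 hk2
  simp only [Finset.mem_image, Finset.mem_range] at hk1 hk2
  obtain ⟨j, _, rfl⟩ := hk1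
  obtain ⟨j', _, h⟩ := hk2
  simp only [kk] at h
  omega

lemma card_Sfin : (Sfin n m).card = 2 * 2^m := by
  rw [Sfin, Finset.card_union_of_disjoint (Sfin_disj n m),
    Finset.card_image_of_injective _ (kk_inj n),
    Finset.card_image_of_injective _ (fun a b h => kk_inj n (neg_inj.mp h))]
  rw [Finset.card_range]
  ring

lemma zero_not_mem_Sfin : (0 : ℤ) ∉ Sfin n m := by
  intro h
  have := (Sfin_natAbs n m h).1
  simp at this

lemma sum_Sfin (F : ℤ → ℂ) :
    ∑ k ∈ Sfin n m, F k
      = (∑ j ∈ Finset.range (2^m), F (kk n j))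
        + ∑ j ∈ Finset.range (2^m), F (-(kk n j)) := by
  rw [Sfin, Finset.sum_union (Sfin_disj n m),
    Finset.sum_image (fun a _ b _ h => kk_inj n h),
    Finset.sum_image (fun a _ b _ h => kk_inj n (neg_inj.mp h))]

end Constr


section Constr2
variable (ψ : ℕ → ℝ) (β : ℝ) (n m : ℕ)

lemma EE_neg (k : ℤ) : EE β (-k) = (starRingEnd ℂ) (EE β k) := by
  unfold EE
  rw [← Complex.exp_conj]
  congr 1
  simp only [map_neg, map_mul, map_div₀, Complex.conj_I, Complex.conj_ofReal, map_ofNat,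
    map_intCast]
  push_cast [Int.sign_neg]
  ring

lemma EE_mul_inv (k : ℤ) :
    EE β k * Complex.exp (Complex.I * (β * π / 2) * ((k.sign : ℤ) : ℂ)) = 1 := by
  unfold EE
  rw [← Complex.exp_add, neg_add_cancel, Complex.exp_zero]

lemma EE_mul_conj (k : ℤ) : EE β k * (starRingEnd ℂ) (EE β k) = 1 := by
  rw [← EE_neg]
  unfold EE
  rw [← Complex.exp_add]
  rw [show (-(Complex.I * (β * π / 2) * ((k.sign : ℤ) : ℂ))
      + -(Complex.I * (β * π / 2) * (((-k).sign : ℤ) : ℂ))) = 0 by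
    push_cast [Int.sign_neg]; ring]
  exact Complex.exp_zero

lemma fcoef_neg (k : ℤ) : fcoef ψ β n m (-k) = (starRingEnd ℂ) (fcoef ψ β n m k) := by
  unfold fcoef
  rw [map_mul, ← EE_neg, Int.natAbs_neg, Complex.conj_ofReal]

lemma gcoef_neg (k : ℤ) : gcoef n m (-k) = (starRingEnd ℂ) (gcoef n m k) := by
  unfold gcoef
  rw [Int.natAbs_neg, Complex.conj_ofReal]

lemma Sfin_neg : (Sfin n m).image (fun k => -k) = Sfin n m := by
  unfold Sfin
  rw [Finset.image_union, Finset.image_image, Finset.image_image]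
  rw [Finset.union_comm]
  congr 1
  ext k
  simp

lemma sum_real (c : ℤ → ℂ) (hc : ∀ k, c (-k) = (starRingEnd ℂ) (c k)) (t : ℝ) :
    (starRingEnd ℂ) (∑ k ∈ Sfin n m, c k * Complex.exp (Complex.I * k * t))
      = ∑ k ∈ Sfin n m, c k * Complex.exp (Complex.I * k * t) := by
  rw [map_sum]
  have h1 : ∀ k ∈ Sfin n m,
      (starRingEnd ℂ) (c k * Complex.exp (Complex.I * k * t))
        = c (-k) * Complex.exp (Complex.I * (-k : ℤ) * t) := by
    intro k _
    rw [map_mul, ← hc, conj_exp_int]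
    congr 2
    push_cast
    ring
  rw [Finset.sum_congr rfl h1]
  have h2 := Finset.sum_image (s := Sfin n m) (g := fun k => -k)
      (f := fun k => c k * Complex.exp (Complex.I * k * t))
      (fun a _ b _ h => neg_inj.mp h)
  rw [Sfin_neg] at h2
  exact h2.symm

end Constr2

section Constr3
variable (ψ : ℕ → ℝ) (β : ℝ) (n m : ℕ)

lemma idx_kk (j : ℕ) : (kk n j).natAbs - (n+1) = j := by
  rw [natAbs_kk]; omega

lemma sign_kk (j : ℕ) : (kk n j).sign = 1 := by
  rw [Int.sign_eq_one_iff_pos]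
  simp only [kk]
  omega

lemma abs_EE (k : ℤ) : ‖EE β k‖ = 1 := by
  unfold EE
  rw [Complex.norm_exp]
  have : (-(Complex.I * (β * π / 2) * ((k.sign : ℤ) : ℂ))).re = 0 := by
    simp [Complex.mul_re, Complex.mul_im]
  rw [this, Real.exp_zero]

lemma exp_kk (j : ℕ) (t : ℝ) :
    Complex.exp (Complex.I * (kk n j : ℂ) * t)
      = Complex.exp (Complex.I * ((n+1 : ℕ) : ℂ) * t) * Complex.exp (Complex.I * j * t) := by
  rw [← Complex.exp_add]
  congr 1
  simp only [kk]
  push_cast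
  ring

lemma sum_S_split (c : ℤ → ℂ) (hc : ∀ k, c (-k) = (starRingEnd ℂ) (c k)) (t : ℝ) :
    ∑ k ∈ Sfin n m, c k * Complex.exp (Complex.I * k * t)
      = (∑ j ∈ Finset.range (2^m), c (kk n j) * Complex.exp (Complex.I * (kk n j : ℂ) * t))
        + (starRingEnd ℂ)
            (∑ j ∈ Finset.range (2^m), c (kk n j) * Complex.exp (Complex.I * (kk n j : ℂ) * t)) := by
  rw [sum_Sfin]
  congr 1
  rw [map_sum]
  refine Finset.sum_congr rfl fun j _ => ?_
  rw [map_mul, ← hc, conj_exp_int]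
  congr 1
  congr 1
  push_cast
  ring

lemma abs_sum_S_le (c : ℤ → ℂ) (hc : ∀ k, c (-k) = (starRingEnd ℂ) (c k)) (w : ℕ → ℂ)
    (hw : ∀ j ∈ Finset.range (2^m), c (kk n j) = w j) (t : ℝ) :
    ‖∑ k ∈ Sfin n m, c k * Complex.exp (Complex.I * k * t)‖
      ≤ 2 * ‖∑ j ∈ Finset.range (2^m), w j * Complex.exp (Complex.I * j * t)‖ := by
  rw [sum_S_split n m c hc t]
  have he : ∀ j ∈ Finset.range (2^m),
      c (kk n j) * Complex.exp (Complex.I * (kk n j : ℂ) * t)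
        = Complex.exp (Complex.I * ((n+1 : ℕ) : ℂ) * t) * (w j * Complex.exp (Complex.I * j * t)) := by
    intro j hj
    rw [exp_kk, hw j hj]
    ring
  rw [Finset.sum_congr rfl he, ← Finset.mul_sum]
  set Z := Complex.exp (Complex.I * ((n+1 : ℕ) : ℂ) * t)
      * ∑ j ∈ Finset.range (2^m), w j * Complex.exp (Complex.I * j * t) with hZ
  calc ‖Z + (starRingEnd ℂ) Z‖ ≤ ‖Z‖ + ‖(starRingEnd ℂ) Z‖ :=
        norm_add_le _ _
    _ = 2 * ‖Z‖ := by rw [Complex.norm_conj]; ring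
    _ = 2 * ‖∑ j ∈ Finset.range (2^m), w j * Complex.exp (Complex.I * j * t)‖ := by
        rw [hZ, norm_mul, abs_cexp_I_nat, one_mul]

lemma sqrt_pos_rs : 0 < Real.sqrt (2^(m+1)) := Real.sqrt_pos.mpr (by positivity)

lemma aRS_pos : 0 < aRS m := by
  unfold aRS
  have := sqrt_pos_rs m
  positivity

lemma abs_gCc_le_one (t : ℝ) : ‖gCc n m t‖ ≤ 1 := by
  unfold gCc
  have h := abs_sum_S_le n m (gcoef n m) (gcoef_neg n m)
      (fun j => ((aRS m : ℝ) : ℂ) * (((rsPair m).1 j : ℝ) : ℂ))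
      (fun j _ => by
        unfold gcoef
        rw [idx_kk]
        push_cast
        ring) t
  refine h.trans ?_
  have he : ∀ j ∈ Finset.range (2^m),
      ((aRS m : ℝ) : ℂ) * (((rsPair m).1 j : ℝ) : ℂ) * Complex.exp (Complex.I * j * t)
        = ((aRS m : ℝ) : ℂ) * ((((rsPair m).1 j : ℝ) : ℂ) * Complex.exp (Complex.I * j * t)) :=
    fun j _ => by ring
  rw [Finset.sum_congr rfl he, ← Finset.mul_sum, norm_mul, Complex.norm_real, Real.norm_eq_abs,
    abs_of_pos (aRS_pos m)]
  have hb : ‖∑ j ∈ Finset.range (2^m),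
      (((rsPair m).1 j : ℝ) : ℂ) * Complex.exp (Complex.I * j * t)‖ ≤ Real.sqrt (2^(m+1)) :=
    rsP_bound m t
  have h2 : 2 * (aRS m * Real.sqrt (2^(m+1))) = 1 := by
    unfold aRS
    field_simp
  calc 2 * (aRS m * ‖∑ j ∈ Finset.range (2^m),
        (((rsPair m).1 j : ℝ) : ℂ) * Complex.exp (Complex.I * j * t)‖)
      ≤ 2 * (aRS m * Real.sqrt (2^(m+1))) := by
        have := aRS_pos m
        gcongr
    _ = 1 := h2

lemma abs_hCc_le (t : ℝ) : ‖hCc β n m t‖ ≤ 2 * Real.sqrt (2^(m+1)) := by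
  unfold hCc
  have h := abs_sum_S_le n m (dcoef β n m) (fun k => by
      unfold dcoef
      rw [map_mul, ← EE_neg, Int.natAbs_neg, Complex.conj_ofReal])
      (fun j => (((rsPair m).1 j : ℝ) : ℂ) * EE β (1 : ℤ))
      (fun j _ => by
        unfold dcoef EE
        rw [idx_kk, sign_kk]
        norm_num) t
  refine h.trans ?_
  have he : ∀ j ∈ Finset.range (2^m),
      (((rsPair m).1 j : ℝ) : ℂ) * EE β (1 : ℤ) * Complex.exp (Complex.I * j * t)
        = EE β (1 : ℤ) * ((((rsPair m).1 j : ℝ) : ℂ) * Complex.exp (Complex.I * j * t)) :=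
    fun j _ => by ring
  rw [Finset.sum_congr rfl he, ← Finset.mul_sum, norm_mul, abs_EE, one_mul]
  have hb := rsP_bound m t
  unfold rsP at hb
  linarith

end Constr3

section Constr4
variable (ψ : ℕ → ℝ) (β : ℝ) (n m : ℕ)

lemma sum_exp_cont (S : Finset ℤ) (c : ℤ → ℂ) :
    Continuous fun t : ℝ => ∑ k ∈ S, c k * Complex.exp (Complex.I * k * t) :=
  continuous_finset_sum _ fun k _ => continuous_const.mul (cexp_int_cont k)

lemma sum_exp_periodic (S : Finset ℤ) (c : ℤ → ℂ) (t : ℝ) :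
    ∑ k ∈ S, c k * Complex.exp (Complex.I * k * ((t + 2*π : ℝ) : ℂ))
      = ∑ k ∈ S, c k * Complex.exp (Complex.I * k * t) := by
  refine Finset.sum_congr rfl fun k _ => ?_
  congr 1
  rw [show Complex.I * k * ((t + 2*π : ℝ) : ℂ) = Complex.I * k * t + k * (2*π*Complex.I) by
    push_cast; ring]
  rw [Complex.exp_add, Complex.exp_int_mul_two_pi_mul_I, mul_one]

lemma real_fCc (t : ℝ) : ((fCc ψ β n m t).re : ℂ) = fCc ψ β n m t :=
  Complex.conj_eq_iff_re.mp (sum_real n m _ (fcoef_neg ψ β n m) t)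

lemma real_gCc (t : ℝ) : ((gCc n m t).re : ℂ) = gCc n m t :=
  Complex.conj_eq_iff_re.mp (sum_real n m _ (gcoef_neg n m) t)

lemma fCc_eq_fun : (fun t : ℝ => (((fCc ψ β n m t).re : ℝ) : ℂ)) = fCc ψ β n m :=
  funext (real_fCc ψ β n m)

lemma gCc_eq_fun : (fun t : ℝ => (((gCc n m t).re : ℝ) : ℂ)) = gCc n m :=
  funext (real_gCc n m)

lemma fourierCoef_fCc (l : ℤ) :
    fourierCoef (fCc ψ β n m) l = if l ∈ Sfin n m then fcoef ψ β n m l else 0 :=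
  fourierCoef_sum _ _ _

lemma fourierCoef_gCc (l : ℤ) :
    fourierCoef (gCc n m) l = if l ∈ Sfin n m then gcoef n m l else 0 :=
  fourierCoef_sum _ _ _

lemma lpsi_f (hpos : ∀ k, 0 < ψ k) :
    LpsiClass ψ β (fun t => (fCc ψ β n m t).re) := by
  refine ⟨?_, ?_, fun t => (gCc n m t).re, ?_, ?_, ?_, ?_, ?_⟩
  · intro t
    show (fCc ψ β n m (t + 2*π)).re = (fCc ψ β n m t).re
    unfold fCc
    rw [sum_exp_periodic (Sfin n m) (fcoef ψ β n m) t]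
  · exact ((Complex.continuous_re.comp (sum_exp_cont _ _)).intervalIntegrable _ _)
  · intro t
    show (gCc n m (t + 2*π)).re = (gCc n m t).re
    unfold gCc
    rw [sum_exp_periodic (Sfin n m) (gcoef n m) t]
  · exact ((Complex.continuous_re.comp (sum_exp_cont _ _)).intervalIntegrable _ _)
  · refine Filter.Eventually.of_forall fun t => ?_
    have h1 : |(gCc n m t).re| ≤ ‖gCc n m t‖ := Complex.abs_re_le_norm _
    exact h1.trans (abs_gCc_le_one n m t)
  · rw [gCc_eq_fun, fourierCoef_gCc, if_neg (zero_not_mem_Sfin n m)]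
  · intro k hk
    rw [gCc_eq_fun, fCc_eq_fun, fourierCoef_gCc, fourierCoef_fCc]
    by_cases hmem : k ∈ Sfin n m
    · rw [if_pos hmem, if_pos hmem]
      have hψC : ((ψ k.natAbs : ℝ) : ℂ) ≠ 0 := by
        exact_mod_cast (hpos k.natAbs).ne'
      unfold gcoef fcoef
      rw [div_mul_eq_mul_div, mul_assoc, EE_mul_inv β k, mul_one, eq_div_iff hψC]
      push_cast
      ring
    · rw [if_neg hmem, if_neg hmem, zero_div, zero_mul]

end Constr4

theorem key_estimate (ψ : ℕ → ℝ) (hpos : ∀ k, 0 < ψ k) (M : ℝ) (hM : 0 < M)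
    (hdec : ∀ k₁ k₂ : ℕ, k₁ ≤ k₂ → ψ k₂ ≤ M * ψ k₁) (K : ℝ) (hK : 0 < K)
    (hdbl : ∀ k : ℕ, 1 ≤ k → ψ k / ψ (2 * k) ≤ K) (β : ℝ) (s : ℝ≥0∞)
    (hs1 : 1 ≤ s) (hs2 : s ≠ ⊤)
    (n : ℕ) (hn : 1 ≤ n) (m : ℕ) (hm1 : 2*n ≤ 2^m) (hm2 : 2^m ≤ 4*n)
    (γ : Finset ℤ) (hγ : γ.card = 2*n) :
    ENNReal.ofReal ((1/(8*M*K^3)) * ψ n) ≤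
      eLpNorm (fun t : ℝ => (((fCc ψ β n m t).re : ℝ) : ℂ) -
        ∑ k ∈ γ, fourierCoef (fun t => (((fCc ψ β n m t).re : ℝ) : ℂ)) k
          * Complex.exp (Complex.I * k * t)) s (volume.restrict (Set.Ioc (0:ℝ) (2*π))) := by
  have huf : (fun t : ℝ => (((fCc ψ β n m t).re : ℝ) : ℂ) -
        ∑ k ∈ γ, fourierCoef (fun t => (((fCc ψ β n m t).re : ℝ) : ℂ)) k
          * Complex.exp (Complex.I * k * t))
      = fun t : ℝ => ∑ k ∈ Sfin n m \ γ, fcoef ψ β n m k * Complex.exp (Complex.I * k * t) := by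
    funext t
    rw [real_fCc, fCc_eq_fun]
    have h1 : ∑ k ∈ γ, fourierCoef (fCc ψ β n m) k * Complex.exp (Complex.I * k * t)
        = ∑ k ∈ γ ∩ Sfin n m, fcoef ψ β n m k * Complex.exp (Complex.I * k * t) := by
      simp_rw [fourierCoef_fCc, ite_mul, zero_mul]
      exact Finset.sum_ite_mem γ (Sfin n m) _
    rw [h1, Finset.inter_comm]
    have h3 := Finset.sum_inter_add_sum_sdiff (Sfin n m) γ
      (fun k => fcoef ψ β n m k * Complex.exp (Complex.I * k * t))
    unfold fCc
    linear_combination -h3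
  rw [huf]
  set u : ℝ → ℂ := fun t => ∑ k ∈ Sfin n m \ γ, fcoef ψ β n m k * Complex.exp (Complex.I * k * t)
    with hu
  set Sψ := ∑ k ∈ Sfin n m \ γ, ψ k.natAbs with hSdef
  have hS0 : 0 ≤ Sψ := Finset.sum_nonneg fun k _ => (hpos _).le
  have hucont : Continuous u := sum_exp_cont _ _
  have hhcont : Continuous (hCc β n m) := sum_exp_cont _ _
  -- pairing value
  have hterm : ∀ k ∈ Sfin n m \ γ,
      fcoef ψ β n m k * (starRingEnd ℂ) (dcoef β n m k)
        = ((aRS m * ψ k.natAbs : ℝ) : ℂ) := by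
    intro k _
    unfold fcoef dcoef
    rw [map_mul, Complex.conj_ofReal]
    have hξ : ((rsPair m).1 (k.natAbs - (n+1)) : ℝ) * ((rsPair m).1 (k.natAbs - (n+1)) : ℝ)
        = 1 := by
      rcases (rsPair_unit m (k.natAbs - (n+1))).1 with h | h <;> rw [h] <;> norm_num
    have hξC : (((rsPair m).1 (k.natAbs - (n+1)) : ℝ) : ℂ)
        * (((rsPair m).1 (k.natAbs - (n+1)) : ℝ) : ℂ) = 1 := by
      rw [← Complex.ofReal_mul, hξ, Complex.ofReal_one]
    calc ((aRS m * (rsPair m).1 (k.natAbs - (n+1)) * ψ k.natAbs : ℝ) : ℂ) * EE β k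
          * ((((rsPair m).1 (k.natAbs - (n+1)) : ℝ) : ℂ) * (starRingEnd ℂ) (EE β k))
        = ((aRS m : ℝ) : ℂ) * ((ψ k.natAbs : ℝ) : ℂ)
            * ((((rsPair m).1 (k.natAbs - (n+1)) : ℝ) : ℂ)
              * (((rsPair m).1 (k.natAbs - (n+1)) : ℝ) : ℂ))
            * (EE β k * (starRingEnd ℂ) (EE β k)) := by push_cast; ring
      _ = ((aRS m * ψ k.natAbs : ℝ) : ℂ) := by
          rw [hξC, EE_mul_conj]; push_cast; ring
  have hintval : ∫ t in (0:ℝ)..(2*π), u t * (starRingEnd ℂ) (hCc β n m t)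
      = ((2*π * (aRS m * Sψ) : ℝ) : ℂ) := by
    have hpair := pairing_integral (Sfin n m \ γ) (Sfin n m) (fcoef ψ β n m) (dcoef β n m)
      Finset.sdiff_subset
    rw [hu]
    unfold hCc
    rw [hpair, Finset.sum_congr rfl hterm]
    rw [show ∑ k ∈ Sfin n m \ γ, ((aRS m * ψ k.natAbs : ℝ) : ℂ)
        = ((∑ k ∈ Sfin n m \ γ, aRS m * ψ k.natAbs : ℝ) : ℂ) by push_cast; rfl]
    rw [← Finset.mul_sum, ← hSdef]
    push_cast
    ring
  -- lower bound for the L¹ norm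
  have hH : ∀ t, ‖hCc β n m t‖ ≤ 2*Real.sqrt (2^(m+1)) := abs_hCc_le β n m
  have hInonneg : 0 ≤ ∫ t in (0:ℝ)..(2*π), ‖u t‖ :=
    intervalIntegral.integral_nonneg (by positivity) (fun t _ => norm_nonneg _)
  have hlow : 2*π * (aRS m * Sψ)
      ≤ (∫ t in (0:ℝ)..(2*π), ‖u t‖) * (2*Real.sqrt (2^(m+1))) := by
    have h1 : ‖∫ t in (0:ℝ)..(2*π), u t * (starRingEnd ℂ) (hCc β n m t)‖
        ≤ ∫ t in (0:ℝ)..(2*π), ‖u t * (starRingEnd ℂ) (hCc β n m t)‖ :=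
      intervalIntegral.norm_integral_le_integral_norm (by positivity)
    rw [hintval] at h1
    have h1' : 2*π * (aRS m * Sψ)
        ≤ ∫ t in (0:ℝ)..(2*π), ‖u t * (starRingEnd ℂ) (hCc β n m t)‖ := by
      refine le_trans ?_ h1
      rw [Complex.norm_real]
      exact le_abs_self _
    have h2 : (∫ t in (0:ℝ)..(2*π), ‖u t * (starRingEnd ℂ) (hCc β n m t)‖)
        ≤ ∫ t in (0:ℝ)..(2*π), ‖u t‖ * (2*Real.sqrt (2^(m+1))) := by
      apply intervalIntegral.integral_mono_on (by positivity)
      · exact ((hucont.mul (Complex.continuous_conj.comp hhcont)).norm).intervalIntegrable _ _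
      · exact ((continuous_norm.comp hucont).mul continuous_const).intervalIntegrable _ _
      · intro t _
        rw [show ‖u t * (starRingEnd ℂ) (hCc β n m t)‖
            = ‖u t‖ * ‖hCc β n m t‖ by
          rw [norm_mul]; simp]
        exact mul_le_mul_of_nonneg_left (hH t) (norm_nonneg _)
    have h3 : (∫ t in (0:ℝ)..(2*π), ‖u t‖ * (2*Real.sqrt (2^(m+1))))
        = (∫ t in (0:ℝ)..(2*π), ‖u t‖) * (2*Real.sqrt (2^(m+1))) :=
      intervalIntegral.integral_mul_const _ _
    linarith
  have hAH : aRS m * (2*Real.sqrt (2^(m+1))) = 1 := by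
    unfold aRS
    field_simp
  have hIlow : 2*π * (aRS m ^2 * Sψ) ≤ ∫ t in (0:ℝ)..(2*π), ‖u t‖ := by
    have ha := aRS_pos m
    nlinarith [hlow, Real.pi_pos]
  -- bound Sψ from below
  have hψmin : ∀ k ∈ Sfin n m \ γ, ψ n / (M * K^3) ≤ ψ k.natAbs := by
    intro k hk
    have hmem := (Finset.mem_sdiff.mp hk).1
    obtain ⟨hA, hB⟩ := Sfin_natAbs n m hmem
    have h8 : k.natAbs ≤ 8*n := by omega
    have e1 : ψ (8*n) ≤ M * ψ k.natAbs := hdec _ _ h8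
    have e2 : ψ n ≤ K * ψ (2*n) := by
      have h := hdbl n hn
      rw [div_le_iff₀ (hpos _)] at h
      linarith [h]
    have e3 : ψ (2*n) ≤ K * ψ (2*(2*n)) := by
      have h := hdbl (2*n) (by omega)
      rw [div_le_iff₀ (hpos _)] at h
      linarith [h]
    have e4 : ψ (2*(2*n)) ≤ K * ψ (2*(2*(2*n))) := by
      have h := hdbl (2*(2*n)) (by omega)
      rw [div_le_iff₀ (hpos _)] at h
      linarith [h]
    have h8eq : 2*(2*(2*n)) = 8*n := by ring
    rw [h8eq] at e4
    rw [div_le_iff₀ (by positivity)]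
    have f3 := mul_le_mul_of_nonneg_left e3 hK.le
    have f4 := mul_le_mul_of_nonneg_left (mul_le_mul_of_nonneg_left e4 hK.le) hK.le
    have f5 := mul_le_mul_of_nonneg_left (mul_le_mul_of_nonneg_left
      (mul_le_mul_of_nonneg_left e1 hK.le) hK.le) hK.le
    nlinarith [f3, f4, f5]
  have hcard : ((2:ℝ)^m) * (ψ n/(M*K^3)) ≤ Sψ := by
    have hc1 : 2^m ≤ (Sfin n m \ γ).card := by
      have h := Finset.le_card_sdiff γ (Sfin n m)
      rw [card_Sfin, hγ] at h
      omega
    have h2 := Finset.card_nsmul_le_sum (Sfin n m \ γ) (fun k => ψ k.natAbs)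
      (ψ n/(M*K^3)) hψmin
    rw [nsmul_eq_mul] at h2
    calc ((2:ℝ)^m) * (ψ n/(M*K^3)) ≤ ((Sfin n m \ γ).card : ℝ) * (ψ n/(M*K^3)) := by
          have : ((2:ℝ)^m) ≤ ((Sfin n m \ γ).card : ℝ) := by exact_mod_cast hc1
          have hc : 0 ≤ ψ n/(M*K^3) := le_of_lt (div_pos (hpos n) (by positivity))
          nlinarith
      _ ≤ Sψ := h2
  have haRS_sq : aRS m ^ 2 * 2^m = 1/8 := by
    have hx : Real.sqrt ((2:ℝ)^(m+1)) ^ 2 = (2:ℝ)^(m+1) := Real.sq_sqrt (by positivity)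
    have hs2m : Real.sqrt ((2:ℝ)^(m+1)) ≠ 0 := (sqrt_pos_rs m).ne'
    have ha : aRS m ^2 = 1/(4 * (2:ℝ)^(m+1)) := by
      unfold aRS
      rw [div_pow, mul_pow, hx]
      norm_num
    rw [ha, pow_succ]
    field_simp
    ring
  have hfinal : π * ψ n / (4*M*K^3) ≤ ∫ t in (0:ℝ)..(2*π), ‖u t‖ := by
    have hstep : 2*π * (aRS m^2 * (((2:ℝ)^m) * (ψ n/(M*K^3)))) ≤ 2*π * (aRS m ^2 * Sψ) := by
      have h0 : (0:ℝ) ≤ 2*π*(aRS m^2) := by positivity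
      nlinarith [mul_le_mul_of_nonneg_left hcard h0]
    have heq : 2*π * (aRS m^2 * (((2:ℝ)^m) * (ψ n/(M*K^3)))) = π * ψ n / (4*M*K^3) := by
      rw [show aRS m^2 * (((2:ℝ)^m) * (ψ n/(M*K^3)))
          = (aRS m^2 * 2^m) * (ψ n/(M*K^3)) by ring, haRS_sq]
      field_simp
      ring
    linarith
  -- ENNReal chain
  set μ := volume.restrict (Set.Ioc (0:ℝ) (2*π)) with hμdef
  have hInt : Integrable u μ := by
    rw [hμdef]
    exact (hucont.integrableOn_Ioc (μ := volume))
  have h1 : ENNReal.ofReal (π * ψ n/(4*M*K^3)) ≤ eLpNorm u 1 μ := by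
    rw [eLpNorm_one_eq_lintegral_enorm, ← ofReal_integral_norm_eq_lintegral_enorm hInt]
    apply ENNReal.ofReal_le_ofReal
    have heq2 : ∫ x, ‖u x‖ ∂μ = ∫ t in (0:ℝ)..(2*π), ‖u t‖ := by
      rw [hμdef, intervalIntegral.integral_of_le (by positivity)]
    rw [heq2]
    exact hfinal
  have hμuniv : μ Set.univ = ENNReal.ofReal (2*π) := by
    rw [hμdef, Measure.restrict_apply_univ, Real.volume_Ioc]
    norm_num
  have h2 : eLpNorm u 1 μ ≤ eLpNorm u s μ * ENNReal.ofReal (2*π) := by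
    have h := eLpNorm_le_eLpNorm_mul_rpow_measure_univ (p := 1) (q := s) hs1
      hucont.aestronglyMeasurable (μ := μ)
    refine h.trans ?_
    rw [hμuniv]
    have hbase : 1 ≤ ENNReal.ofReal (2*π) := by
      rw [ENNReal.one_le_ofReal]
      nlinarith [Real.pi_gt_three]
    have hexp : (1/(1:ℝ≥0∞).toReal - 1/s.toReal) ≤ 1 := by
      rw [ENNReal.toReal_one]
      have : (0:ℝ) ≤ 1/s.toReal := by positivity
      linarith
    have hpow : ENNReal.ofReal (2*π) ^ (1/(1:ℝ≥0∞).toReal - 1/s.toReal)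
        ≤ ENNReal.ofReal (2*π) := by
      calc ENNReal.ofReal (2*π) ^ (1/(1:ℝ≥0∞).toReal - 1/s.toReal)
          ≤ ENNReal.ofReal (2*π) ^ (1:ℝ) := ENNReal.rpow_le_rpow_of_exponent_le hbase hexp
        _ = ENNReal.ofReal (2*π) := ENNReal.rpow_one _
    exact mul_le_mul_right hpow _
  have hsplit : ENNReal.ofReal (π * ψ n/(4*M*K^3))
      = ENNReal.ofReal ((1/(8*M*K^3)) * ψ n) * ENNReal.ofReal (2*π) := by
    have h8 : (0:ℝ) < 8*M*K^3 := mul_pos (mul_pos (by norm_num) hM) (pow_pos hK 3)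
    rw [← ENNReal.ofReal_mul (le_of_lt (mul_pos (div_pos one_pos h8) (hpos n)))]
    congr 1
    field_simp
    ring
  have hchain : ENNReal.ofReal ((1/(8*M*K^3)) * ψ n) * ENNReal.ofReal (2*π)
      ≤ eLpNorm u s μ * ENNReal.ofReal (2*π) := by
    rw [← hsplit]
    exact h1.trans h2
  have h2π : ENNReal.ofReal (2*π) ≠ 0 := by
    rw [Ne, ENNReal.ofReal_eq_zero, not_le]
    positivity
  exact (ENNReal.mul_le_mul_iff_left h2π ENNReal.ofReal_ne_top).mp hchain

/-- If `ψ` is positive, almost decreasing with constant `M` and satisfies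
`ψ(k)/ψ(2k) ≤ K`, then there is `C > 0` such that for every `n ≥ 1` there is
`f₂ ∈ L^ψ_{β,∞}` with `‖f₂ - S_γ(f₂)‖_s ≥ C ψ(n)` for every `γ ⊂ ℤ` of cardinality `2n`;
consequently `e^⊥_{2n}(L^ψ_{β,∞})_s ≥ C ψ(n)`. -/
theorem eBot_lower_bound (ψ : ℕ → ℝ) (hpos : ∀ k, 0 < ψ k)
    (M : ℝ) (hM : 0 < M) (hdec : ∀ k₁ k₂ : ℕ, k₁ ≤ k₂ → ψ k₂ ≤ M * ψ k₁)
    (K : ℝ) (hK : 0 < K) (hdbl : ∀ k : ℕ, 1 ≤ k → ψ k / ψ (2 * k) ≤ K)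
    (β : ℝ) (s : ℝ≥0∞) (hs1 : 1 ≤ s) (hs2 : s ≠ ⊤) :
    ∃ C : ℝ, 0 < C ∧ ∀ n : ℕ, 1 ≤ n →
      (∃ f : ℝ → ℝ, LpsiClass ψ β f ∧
        ∀ γ : Finset ℤ, γ.card = 2 * n →
          ENNReal.ofReal (C * ψ n) ≤
            eLpNorm
              (fun t : ℝ => (f t : ℂ) -
                ∑ k ∈ γ, fourierCoef (fun t => (f t : ℂ)) k * Complex.exp (Complex.I * k * t))
              s (volume.restrict (Set.Ioc (0 : ℝ) (2 * π)))) ∧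
      ENNReal.ofReal (C * ψ n) ≤ eBotClass ψ β (2 * n) s := by

  refine ⟨1/(8*M*K^3), div_pos one_pos (mul_pos (mul_pos (by norm_num) hM) (pow_pos hK 3)), ?_⟩
  intro n hn
  set m := Nat.clog 2 (2*n) with hmdef
  have hm1 : 2*n ≤ 2^m := Nat.le_pow_clog (by norm_num) _
  have hm2 : 2^m ≤ 4*n := by
    have h1 : 1 < 2*n := by omega
    have h2 := Nat.pow_pred_clog_lt_self (b := 2) (by norm_num) h1
    have hm0 : 1 ≤ m := by
      by_contra h
      push_neg at h
      interval_cases m <;> omega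
    have h3 : 2^m = 2^(m-1) * 2 := by
      rw [show m = m-1+1 by omega, pow_succ]
      congr 1 <;> omega
    rw [Nat.pred_eq_sub_one, ← hmdef] at h2
    omega
  refine ⟨⟨fun t => (fCc ψ β n m t).re, lpsi_f ψ β n m hpos, fun γ hγ =>
    key_estimate ψ hpos M hM hdec K hK hdbl β s hs1 hs2 n hn m hm1 hm2 γ hγ⟩, ?_⟩
  unfold eBotClass
  refine le_trans ?_ (le_iSup _
    (⟨fun t => (fCc ψ β n m t).re, lpsi_f ψ β n m hpos⟩ : {f : ℝ → ℝ // LpsiClass ψ β f}))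
  refine le_iInf fun γ => ?_
  exact key_estimate ψ hpos M hM hdec K hK hdbl β s hs1 hs2 n hn m hm1 hm2 γ.1 γ.2
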